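/- A small category J is sifted if and only if taking colimits of shape J in the category of types commutes with finite products, i.e. the colimit functor colim_J : Fun(J, Type) → Type preserves finite products. -/

import Mathlib

open CategoryTheory CategoryTheory.Limits

universe u

namespace SiftedColimAux

open CategoryTheory.Functor

variable {J : Type u} [SmallCategory J]

/-- The "external" binary product functor on `J × J`. -/
@[simps]
def bip (F G : J ⥤ Type u) : J × J ⥤ Type u where
  obj p := F.obj p.1 × G.obj p.2
  map f := ↾fun z => (F.map f.1 z.1, G.map f.2 z.2)
  map_id p := by ext z <;> simp
  map_comp f g := by ext z <;> simp

/-- The pointwise product of two functors to types. -/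
def pprod (F G : J ⥤ Type u) : J ⥤ Type u := Functor.diag J ⋙ bip F G

/-- First projection. -/
def pfst (F G : J ⥤ Type u) : pprod F G ⟶ F where
  app j := ↾fun z => z.1
  naturality _ _ _ := rfl

/-- Second projection. -/
def psnd (F G : J ⥤ Type u) : pprod F G ⟶ G where
  app j := ↾fun z => z.2
  naturality _ _ _ := rfl

/-- The pointwise product is a binary product in the functor category. -/
noncomputable def pprodIsLimit (F G : J ⥤ Type u) :
    IsLimit (BinaryFan.mk (pfst F G) (psnd F G)) :=
  BinaryFan.isLimitMk
    (fun s =>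
      { app := fun j => ↾fun w => (s.fst.app j w, s.snd.app j w)
        naturality := fun j j' f => by
          ext w
          have h1 := ConcreteCategory.congr_hom (s.fst.naturality f) w
          have h2 := ConcreteCategory.congr_hom (s.snd.naturality f) w
          simp only [types_comp_apply] at h1 h2
          exact Prod.ext h1 h2 })
    (fun s => rfl) (fun s => rfl)
    (fun s m h1 h2 => by
      ext j w
      have e1 := ConcreteCategory.congr_hom (congr_app h1 j) w
      have e2 := ConcreteCategory.congr_hom (congr_app h2 j) w
      simp only [FunctorToTypes.comp] at e1 e2
      exact Prod.ext e1 e2)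

/-- The canonical comparison out of the colimit of `bip F G`. -/
noncomputable def phi' (F G : J ⥤ Type u) :
    colimit (bip F G) ⟶ (colimit F × colimit G : Type u) :=
  colimit.desc (bip F G)
    { pt := (colimit F × colimit G : Type u)
      ι :=
        { app := fun p => ↾fun z => (colimit.ι F p.1 z.1, colimit.ι G p.2 z.2)
          naturality := fun p q f => by
            ext z
            dsimp
            exact Prod.ext (ConcreteCategory.congr_hom (colimit.w F f.1) z.1)
              (ConcreteCategory.congr_hom (colimit.w G f.2) z.2) } }

@[simp]
lemma phi'_ι (F G : J ⥤ Type u) (p : J × J) (z : F.obj p.1 × G.obj p.2) :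
    phi' F G (colimit.ι (bip F G) p z) = (colimit.ι F p.1 z.1, colimit.ι G p.2 z.2) :=
  by unfold phi'; exact colimit.ι_desc_apply (F := bip F G) _ p z

lemma move_fst (F G : J ⥤ Type u) (b : J) (y : G.obj b) :
    ∀ (p q : Σ j, F.obj j), Relation.EqvGen F.ColimitTypeRel p q →
      colimit.ι (bip F G) (p.1, b) (p.2, y) = colimit.ι (bip F G) (q.1, b) (q.2, y) := by
  intro p q h
  induction h with
  | rel p q h =>
    obtain ⟨f, hf⟩ := h
    refine Types.colimit_sound (F := bip F G) ((f, 𝟙 b) : (p.1, b) ⟶ (q.1, b)) ?_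
    show (F.map f p.2, G.map (𝟙 b) y) = (q.2, y)
    rw [← hf]
    simp
  | refl p => rfl
  | symm _ _ _ ih => exact ih.symm
  | trans _ _ _ _ _ ih₁ ih₂ => exact ih₁.trans ih₂

lemma move_snd (F G : J ⥤ Type u) (a : J) (x : F.obj a) :
    ∀ (p q : Σ j, G.obj j), Relation.EqvGen G.ColimitTypeRel p q →
      colimit.ι (bip F G) (a, p.1) (x, p.2) = colimit.ι (bip F G) (a, q.1) (x, q.2) := by
  intro p q h
  induction h with
  | rel p q h =>
    obtain ⟨f, hf⟩ := h
    refine Types.colimit_sound (F := bip F G) ((𝟙 a, f) : (a, p.1) ⟶ (a, q.1)) ?_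
    show (F.map (𝟙 a) x, G.map f p.2) = (x, q.2)
    rw [← hf]
    simp
  | refl p => rfl
  | symm _ _ _ ih => exact ih.symm
  | trans _ _ _ _ _ ih₁ ih₂ => exact ih₁.trans ih₂

lemma phi'_bijective (F G : J ⥤ Type u) : Function.Bijective (phi' F G) := by
  constructor
  · intro z z' h
    obtain ⟨⟨a, b⟩, ⟨x, y⟩, rfl⟩ := Types.jointly_surjective' z
    obtain ⟨⟨a', b'⟩, ⟨x', y'⟩, rfl⟩ := Types.jointly_surjective' z'
    simp only [phi'_ι, Prod.mk.injEq] at h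
    calc colimit.ι (bip F G) (a, b) (x, y)
        = colimit.ι (bip F G) (a', b) (x', y) :=
          move_fst F G b y ⟨a, x⟩ ⟨a', x'⟩ (Types.colimit_eq h.1)
      _ = colimit.ι (bip F G) (a', b') (x', y') :=
          move_snd F G a' x' ⟨b, y⟩ ⟨b', y'⟩ (Types.colimit_eq h.2)
  · rintro ⟨u, v⟩
    obtain ⟨a, x, rfl⟩ := Types.jointly_surjective' u
    obtain ⟨b, y, rfl⟩ := Types.jointly_surjective' v
    exact ⟨colimit.ι (bip F G) (a, b) (x, y), by simp⟩

section Sifted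

variable [IsSifted J]

/-- The comparison equivalence for a sifted category. -/
noncomputable def theEquiv (F G : J ⥤ Type u) :
    colim.obj (pprod F G) ≃ (colimit F × colimit G : Type u) :=
  Equiv.ofBijective (fun z => phi' F G (colimit.pre (bip F G) (Functor.diag J) z))
    (by
      refine (phi'_bijective F G).comp ?_
      exact (isIso_iff_bijective _).1 inferInstance)

lemma theEquiv_apply (F G : J ⥤ Type u) (z : colim.obj (pprod F G)) :
    theEquiv F G z = (colim.map (pfst F G) z, colim.map (psnd F G) z) := by
  obtain ⟨j, w, rfl⟩ := Types.jointly_surjective' (F := pprod F G) z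
  have hpre : colimit.pre (bip F G) (Functor.diag J) (colimit.ι (pprod F G) j w)
      = colimit.ι (bip F G) (j, j) w :=
    ConcreteCategory.congr_hom (colimit.ι_pre (bip F G) (Functor.diag J) j) w
  show phi' F G (colimit.pre (bip F G) (Functor.diag J) (colimit.ι (pprod F G) j w)) = _
  erw [hpre, phi'_ι, colimit.ι_map_apply, colimit.ι_map_apply]
  rfl

/-- The mapped cone is a limit cone. -/
noncomputable def mapConeIsLimit (F G : J ⥤ Type u) :
    IsLimit (colim.mapCone (BinaryFan.mk (pfst F G) (psnd F G))) := by
  refine IsLimit.mk (fun s => ↾fun w =>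
    (theEquiv F G).symm (s.π.app ⟨WalkingPair.left⟩ w, s.π.app ⟨WalkingPair.right⟩ w)) ?_ ?_
  · rintro s ⟨(_ | _)⟩
    · ext w
      show colim.map (pfst F G) ((theEquiv F G).symm _) = _
      have h := theEquiv_apply F G ((theEquiv F G).symm
        (s.π.app ⟨WalkingPair.left⟩ w, s.π.app ⟨WalkingPair.right⟩ w))
      rw [Equiv.apply_symm_apply] at h
      exact (congrArg Prod.fst h).symm
    · ext w
      show colim.map (psnd F G) ((theEquiv F G).symm _) = _
      have h := theEquiv_apply F G ((theEquiv F G).symm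
        (s.π.app ⟨WalkingPair.left⟩ w, s.π.app ⟨WalkingPair.right⟩ w))
      rw [Equiv.apply_symm_apply] at h
      exact (congrArg Prod.snd h).symm
  · intro s m hm
    ext w
    apply (theEquiv F G).injective
    show theEquiv F G (m w) = theEquiv F G ((theEquiv F G).symm
      (s.π.app ⟨WalkingPair.left⟩ w, s.π.app ⟨WalkingPair.right⟩ w))
    rw [Equiv.apply_symm_apply, theEquiv_apply]
    have h1 := ConcreteCategory.congr_hom (hm ⟨WalkingPair.left⟩) w
    have h2 := ConcreteCategory.congr_hom (hm ⟨WalkingPair.right⟩) w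
    exact Prod.ext h1 h2

lemma preservesPair (F G : J ⥤ Type u) :
    PreservesLimit (pair F G) (colim : (J ⥤ Type u) ⥤ Type u) :=
  preservesLimit_of_preserves_limit_cone (pprodIsLimit F G) (mapConeIsLimit F G)

/-- The constant functor with value `PUnit`. -/
def tUnit : J ⥤ Type u := (Functor.const J).obj PUnit

noncomputable def tUnitIsTerminal : IsTerminal (tUnit : J ⥤ Type u) :=
  IsTerminal.ofUniqueHom (fun W => { app := fun j => ↾fun _ => PUnit.unit, naturality := fun _ _ _ => rfl })
    (fun W m => by ext j w; rfl)

instance : Subsingleton (colimit (tUnit : J ⥤ Type u)) := by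
  constructor
  intro z z'
  obtain ⟨j, y, rfl⟩ := Types.jointly_surjective' z
  obtain ⟨j', y', rfl⟩ := Types.jointly_surjective' z'
  have : ∀ w : PUnit.{u+1}, w = PUnit.unit := fun _ => rfl
  rw [this y, this y']
  exact constant_of_preserves_morphisms (fun j => colimit.ι (tUnit : J ⥤ Type u) j PUnit.unit)
    (fun j j' f => Types.colimit_sound f rfl) j j'

noncomputable def mapConeEmptyIsLimit :
    IsLimit (colim.mapCone (asEmptyCone (tUnit : J ⥤ Type u))) := by
  have j₀ : J := Classical.choice IsSifted.nonempty
  refine IsLimit.mk (fun s => ↾fun _ => colimit.ι (tUnit : J ⥤ Type u) j₀ PUnit.unit) ?_ ?_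
  · rintro s ⟨⟨⟩⟩
  · intro s m _
    ext w
    exact @Subsingleton.elim _ (inferInstanceAs (Subsingleton (colimit (tUnit : J ⥤ Type u)))) _ _

lemma preservesEmpty : PreservesLimit (Functor.empty.{0} (J ⥤ Type u))
    (colim : (J ⥤ Type u) ⥤ Type u) :=
  preservesLimit_of_preserves_limit_cone tUnitIsTerminal mapConeEmptyIsLimit

end Sifted

section Converse

/-- If the colimit functor preserves binary products, colimits of pointwise products
of corepresentables are singletons. -/
lemma converse_subsingleton
    [PreservesLimitsOfShape (Discrete WalkingPair) (colim : (J ⥤ Type u) ⥤ Type u)]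
    (c₁ c₂ : J) :
    Nonempty (colim.obj (pprod (coyoneda.obj (Opposite.op c₁)) (coyoneda.obj (Opposite.op c₂))))
    ∧ Subsingleton
      (colim.obj (pprod (coyoneda.obj (Opposite.op c₁)) (coyoneda.obj (Opposite.op c₂)))) := by
  set A := coyoneda.obj (Opposite.op c₁)
  set B := coyoneda.obj (Opposite.op c₂)
  have sA : Subsingleton (colim.obj A) :=
    (Coyoneda.colimitCoyonedaIso (Opposite.op c₁)).toEquiv.subsingleton
  have sB : Subsingleton (colim.obj B) :=
    (Coyoneda.colimitCoyonedaIso (Opposite.op c₂)).toEquiv.subsingleton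
  have hL : IsLimit (colim.mapCone (BinaryFan.mk (pfst A B) (psnd A B))) :=
    isLimitOfPreserves colim (pprodIsLimit A B)
  have hsub : ∀ j : Discrete WalkingPair, Subsingleton ((pair A B ⋙ colim).obj j) := by
    rintro ⟨(_ | _)⟩
    · exact sA
    · exact sB
  let aA : colim.obj A := (Coyoneda.colimitCoyonedaIso (Opposite.op c₁)).inv PUnit.unit
  let aB : colim.obj B := (Coyoneda.colimitCoyonedaIso (Opposite.op c₂)).inv PUnit.unit
  let s0 : Cone (pair A B ⋙ colim) :=
    { pt := PUnit.{u+1}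
      π := Discrete.natTrans (fun j =>
        match j with
        | ⟨WalkingPair.left⟩ => ↾fun _ => aA
        | ⟨WalkingPair.right⟩ => ↾fun _ => aB) }
  constructor
  · exact ⟨hL.lift s0 PUnit.unit⟩
  · constructor
    intro z z'
    have h1 : (↾fun _ : PUnit.{u+1} => z) = hL.lift s0 := by
      refine hL.uniq s0 _ (fun j => ?_)
      haveI := hsub j
      ext w
      exact Subsingleton.elim _ _
    have h2 : (↾fun _ : PUnit.{u+1} => z') = hL.lift s0 := by
      refine hL.uniq s0 _ (fun j => ?_)
      haveI := hsub j
      ext w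
      exact Subsingleton.elim _ _
    exact ConcreteCategory.congr_hom (h1.trans h2.symm) PUnit.unit

end Converse

end SiftedColimAux

open SiftedColimAux in
/-- A small category `J` is sifted if and only if the colimit functor
`colim : (J ⥤ Type) ⥤ Type` preserves finite products. -/
theorem isSifted_iff_colim_preservesFiniteProducts {J : Type u} [SmallCategory J] :
    IsSifted J ↔
      Nonempty (PreservesFiniteProducts (colim : (J ⥤ Type u) ⥤ Type u)) := by
  constructor
  · intro hs
    haveI h1 : PreservesLimitsOfShape (Discrete WalkingPair) (colim : (J ⥤ Type u) ⥤ Type u) := by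
      constructor
      intro K
      haveI := preservesPair (J := J) (K.obj ⟨WalkingPair.left⟩) (K.obj ⟨WalkingPair.right⟩)
      exact preservesLimit_of_iso_diagram colim (diagramIsoPair K).symm
    haveI := preservesEmpty (J := J)
    haveI h2 : PreservesLimitsOfShape (Discrete PEmpty.{1}) (colim : (J ⥤ Type u) ⥤ Type u) :=
      preservesLimitsOfShape_pempty_of_preservesTerminal _
    exact ⟨PreservesFiniteProducts.of_preserves_binary_and_terminal colim⟩
  · rintro ⟨h⟩
    haveI := h
    haveI hne : Nonempty J := by
      haveI : PreservesLimitsOfShape (Discrete PEmpty.{1}) (colim : (J ⥤ Type u) ⥤ Type u) :=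
        inferInstance
      have i : colim.obj (⊤_ (J ⥤ Type u)) ≅ PUnit :=
        PreservesTerminal.iso colim ≪≫ Types.terminalIso
      exact Types.nonempty_of_nonempty_colimit ⟨i.inv PUnit.unit⟩
    haveI : PreservesLimitsOfShape (Discrete WalkingPair) (colim : (J ⥤ Type u) ⥤ Type u) :=
      inferInstance
    haveI hfin : IsSiftedOrEmpty J := by
      refine Functor.final_of_colimit_comp_coyoneda_iso_pUnit _ (fun d => ?_)
      obtain ⟨c₁, c₂⟩ := d
      obtain ⟨hne', hsub⟩ := converse_subsingleton (J := J) c₁ c₂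
      haveI : Subsingleton (colimit (pprod (coyoneda.obj (Opposite.op c₁))
        (coyoneda.obj (Opposite.op c₂)))) := hsub
      have iso1 : (Functor.diag J ⋙ coyoneda.obj (Opposite.op (c₁, c₂))) ≅
          pprod (coyoneda.obj (Opposite.op c₁)) (coyoneda.obj (Opposite.op c₂)) :=
        NatIso.ofComponents (fun j => Iso.refl _) (fun f => rfl)
      refine HasColimit.isoOfNatIso iso1 ≪≫ ?_
      exact
        { hom := ↾fun _ => PUnit.unit
          inv := ↾fun _ => Classical.choice hne'
          hom_inv_id := by ext z; exact Subsingleton.elim _ _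
          inv_hom_id := rfl }
    constructor
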